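/- Let f ∈ ℤ[X] with 0 < |f(a)| < |f(b)| for integers a, b with a² < b², let M be the maximum of the absolute values of the complex roots of f, let k ≥ 1, and suppose q_k = 1 (with q_k defined via admissible divisors). If M < |a+b|/2, then f is a product of at most k irreducible factors over ℚ. -/

import Mathlib

open Polynomial Real

noncomputable section

/-- `d` is an admissible divisor of `f(a)`. -/
def AdmDiv (f : Polynomial ℤ) (a d : ℤ) : Prop :=
  d ∣ f.eval a ∧
    Int.gcd d (f.eval a / d) ∣ Int.gcd (f.eval a) (f.derivative.eval a)

/-- `d` is a unitary divisor of `N`. -/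
def UnitDiv (N d : ℤ) : Prop := d ∣ N ∧ Int.gcd d (N / d) = 1

/-- `f` is a product of at most `k` nonconstant irreducible factors over `ℚ`
(counting multiplicities): it cannot be written as a product of `k + 1`
nonconstant polynomials over `ℚ`. -/
def FactorsAtMost (f : Polynomial ℤ) (k : ℕ) : Prop :=
  ∀ g : Fin (k + 1) → Polynomial ℚ, (∀ i, 0 < (g i).natDegree) →
    f.map (Int.castRingHom ℚ) ≠ ∏ i, g i

/-- `q` is the quantity `q_k` of the paper: the greatest ratio `d₂/d₁` of
admissible divisors of `f(b)` and `f(a)` not exceeding `(|f(b)|/|f(a)|)^(1/(k+1))`. -/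
def IsQk (f : Polynomial ℤ) (a b : ℤ) (k : ℕ) (q : ℝ) : Prop :=
  IsGreatest {x : ℝ | ∃ d₁ d₂ : ℤ, AdmDiv f a d₁ ∧ AdmDiv f b d₂ ∧
    x = (d₂ : ℝ) / (d₁ : ℝ) ∧
    x ≤ (|((f.eval b : ℤ) : ℝ)| / |((f.eval a : ℤ) : ℝ)|) ^ ((k + 1 : ℝ))⁻¹} q

/-- `q` is the quantity `q^u_k` of the paper, defined via unitary divisors. -/
def IsQuk (f : Polynomial ℤ) (a b : ℤ) (k : ℕ) (q : ℝ) : Prop :=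
  IsGreatest {x : ℝ | ∃ d₁ d₂ : ℤ, UnitDiv (f.eval a) d₁ ∧ UnitDiv (f.eval b) d₂ ∧
    x = (d₂ : ℝ) / (d₁ : ℝ) ∧
    x ≤ (|((f.eval b : ℤ) : ℝ)| / |((f.eval a : ℤ) : ℝ)|) ^ ((k + 1 : ℝ))⁻¹} q


lemma admDiv_abs {f : Polynomial ℤ} {a d : ℤ} (h : AdmDiv f a d) : AdmDiv f a |d| := by
  obtain ⟨h1, h2⟩ := h
  rcases abs_choice d with hd | hd
  · rw [hd]; exact ⟨h1, h2⟩
  · rw [hd]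
    refine ⟨(Int.neg_dvd).mpr h1, ?_⟩
    rwa [Int.ediv_neg, Int.neg_gcd, Int.gcd_neg]

lemma admDiv_of_factor {f P H : Polynomial ℤ} {a : ℤ} (hfa : f.eval a ≠ 0)
    (h : f = P * H) : AdmDiv f a (P.eval a) := by
  have he : f.eval a = P.eval a * H.eval a := by rw [h, eval_mul]
  have hP0 : P.eval a ≠ 0 := fun h0 => hfa (by rw [he, h0, zero_mul])
  have hdvd : P.eval a ∣ f.eval a := ⟨H.eval a, he⟩
  refine ⟨hdvd, ?_⟩
  have hdiv : f.eval a / P.eval a = H.eval a := by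
    rw [he, Int.mul_ediv_cancel_left _ hP0]
  rw [hdiv, ← Int.natCast_dvd_natCast]
  apply Int.dvd_coe_gcd
  · exact dvd_trans (Int.gcd_dvd_left _ _) hdvd
  · have hder : f.derivative.eval a =
        (derivative P).eval a * H.eval a + P.eval a * (derivative H).eval a := by
      rw [h, derivative_mul, eval_add, eval_mul, eval_mul]
    rw [hder]
    exact dvd_add ((Int.gcd_dvd_right _ _).mul_left _) ((Int.gcd_dvd_left _ _).mul_right _)

lemma multiset_prod_le {α : Type*} (s : Multiset α) (g h : α → ℝ)
    (hg : ∀ x ∈ s, 0 ≤ g x) (hgh : ∀ x ∈ s, g x ≤ h x) :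
    (s.map g).prod ≤ (s.map h).prod := by
  induction s using Multiset.induction with
  | empty => simp
  | cons y t ih =>
    simp only [Multiset.map_cons, Multiset.prod_cons]
    have h1 : (t.map g).prod ≤ (t.map h).prod :=
      ih (fun x hx => hg x (Multiset.mem_cons_of_mem hx))
        (fun x hx => hgh x (Multiset.mem_cons_of_mem hx))
    have h2 : 0 ≤ (t.map g).prod :=
      Multiset.prod_nonneg (by
        intro x hx; obtain ⟨z, hz, rfl⟩ := Multiset.mem_map.mp hx
        exact hg z (Multiset.mem_cons_of_mem hz))
    exact mul_le_mul (hgh y (Multiset.mem_cons_self y t)) h1 h2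
      (le_trans (hg y (Multiset.mem_cons_self y t)) (hgh y (Multiset.mem_cons_self y t)))

lemma multiset_prod_lt {α : Type*} (s : Multiset α) (hs : s ≠ 0) (g h : α → ℝ)
    (hg : ∀ x ∈ s, 0 ≤ g x) (hgh : ∀ x ∈ s, g x < h x) :
    (s.map g).prod < (s.map h).prod := by
  induction s using Multiset.induction with
  | empty => exact absurd rfl hs
  | cons y t ih =>
    simp only [Multiset.map_cons, Multiset.prod_cons]
    have hgt : ∀ x ∈ t, 0 ≤ g x := fun x hx => hg x (Multiset.mem_cons_of_mem hx)
    have hght : ∀ x ∈ t, g x ≤ h x := fun x hx => (hgh x (Multiset.mem_cons_of_mem hx)).le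
    have h1 : (t.map g).prod ≤ (t.map h).prod := multiset_prod_le t g h hgt hght
    have h3 : 0 < (t.map h).prod := by
      apply Multiset.prod_pos
      intro x hx; obtain ⟨z, hz, rfl⟩ := Multiset.mem_map.mp hx
      exact lt_of_le_of_lt (hgt z hz) (hgh z (Multiset.mem_cons_of_mem hz))
    calc g y * (t.map g).prod ≤ g y * (t.map h).prod :=
          mul_le_mul_of_nonneg_left h1 (hg y (Multiset.mem_cons_self y t))
      _ < h y * (t.map h).prod :=
          mul_lt_mul_of_pos_right (hgh y (Multiset.mem_cons_self y t)) h3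

lemma root_lt {a b : ℤ} (hab2 : a ^ 2 < b ^ 2) {M : ℝ} (hMab : M < (|a + b| : ℝ) / 2)
    {θ : ℂ} (hθM : ‖θ‖ ≤ M) :
    ‖(a : ℂ) - θ‖ < ‖(b : ℂ) - θ‖ := by
  have habR : (a : ℝ) ^ 2 < (b : ℝ) ^ 2 := by exact_mod_cast hab2
  have ht : |θ.re| < |(a : ℝ) + b| / 2 := by
    calc |θ.re| ≤ ‖θ‖ := Complex.abs_re_le_norm θ
      _ ≤ M := hθM
      _ < (|a + b| : ℝ) / 2 := hMab
      _ = |(a : ℝ) + b| / 2 := by push_cast; ring_nf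
  apply lt_of_pow_lt_pow_left₀ 2 (norm_nonneg _)
  rw [Complex.sq_norm, Complex.sq_norm, Complex.normSq_apply, Complex.normSq_apply]
  simp only [Complex.sub_re, Complex.sub_im, Complex.intCast_re, Complex.intCast_im]
  have h1 : |θ.re| < ((a:ℝ) + b) / 2 ∨ |θ.re| < -(((a:ℝ) + b)) / 2 := by
    rcases abs_cases ((a:ℝ) + b) with ⟨h, _⟩ | ⟨h, _⟩
    · left; rwa [h] at ht
    · right; rwa [h] at ht
  have h2 := abs_nonneg θ.re
  have h3 := neg_abs_le θ.re
  have h4 := le_abs_self θ.re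
  rcases h1 with h | h <;> nlinarith [sq_nonneg ((a:ℝ) - b), sq_nonneg ((a:ℝ) + b)]

lemma eval_abs_lt {f P : Polynomial ℤ} {a b : ℤ} (hdvd : P ∣ f) (hdeg : 0 < P.natDegree)
    (hroot : ∀ θ : ℂ, aeval θ f = 0 →
      ‖(a : ℂ) - θ‖ < ‖(b : ℂ) - θ‖) :
    |P.eval a| < |P.eval b| := by
  set φ := Int.castRingHom ℂ with hφ
  have hinj : Function.Injective φ := fun x y h => by simpa [hφ] using h
  set Pc := P.map φ with hPc
  have hP0 : P ≠ 0 := fun h => by simp [h] at hdeg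
  have hPc0 : Pc ≠ 0 := by
    rw [hPc, Ne, Polynomial.map_eq_zero_iff hinj]; exact hP0
  have hdegc : Pc.natDegree = P.natDegree := natDegree_map_eq_of_injective hinj P
  have hsplits : Splits Pc := IsAlgClosed.splits Pc
  have hcard : Pc.roots.card = P.natDegree := by
    rw [← hdegc]; exact (splits_iff_card_roots.mp hsplits)
  have hne : Pc.roots ≠ 0 := by
    intro h; rw [h] at hcard; simp at hcard; omega
  have hfroot : ∀ θ ∈ Pc.roots, aeval θ f = 0 := by
    intro θ hθ
    have h1 : Pc.eval θ = 0 := (mem_roots hPc0).mp hθ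
    have h2 : Pc ∣ f.map φ := Polynomial.map_dvd φ hdvd
    have h3 : (f.map φ).eval θ = 0 := by
      obtain ⟨q, hq⟩ := h2
      rw [hq, eval_mul, h1, zero_mul]
    rwa [aeval_def, ← eval_map]
  have hevalx : ∀ x : ℤ, ‖Pc.eval (x : ℂ)‖ =
      (‖φ P.leadingCoeff‖) *
        (Pc.roots.map (fun θ => ‖(x : ℂ) - θ‖)).prod := by
    intro x
    conv_lhs => rw [hsplits.eq_prod_roots]
    rw [eval_mul, eval_C, norm_mul]
    congr 1
    · rw [hPc, leadingCoeff_map_of_leadingCoeff_ne_zero φ (by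
        simp only [hφ, Int.coe_castRingHom, Ne, Int.cast_eq_zero]
        exact leadingCoeff_ne_zero.mpr hP0)]
    · rw [eval_multiset_prod, Multiset.map_map, show ∀ m : Multiset ℂ, ‖m.prod‖ = (m.map norm).prod from fun m => map_multiset_prod (normHom.toMonoidHom : ℂ →* ℝ) m, Multiset.map_map]
      congr 1
      ext θ
      simp
  have key : ‖Pc.eval (a : ℂ)‖ < ‖Pc.eval (b : ℂ)‖ := by
    rw [hevalx a, hevalx b]
    have hlc : 0 < ‖φ P.leadingCoeff‖ := by
      apply norm_pos_iff.mpr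
      simp only [hφ, Int.coe_castRingHom, Ne, Int.cast_eq_zero]
      exact leadingCoeff_ne_zero.mpr hP0
    apply mul_lt_mul_of_pos_left _ hlc
    exact multiset_prod_lt _ hne _ _ (fun θ _ => norm_nonneg _)
      (fun θ hθ => hroot θ (hfroot θ hθ))
  have hea : Pc.eval ((a : ℤ) : ℂ) = φ (P.eval a) := by
    rw [hPc, eval_intCast_map]; simp
  have heb : Pc.eval ((b : ℤ) : ℂ) = φ (P.eval b) := by
    rw [hPc, eval_intCast_map]; simp
  rw [hea, heb] at key
  have h2 : ((|P.eval a| : ℤ) : ℝ) < ((|P.eval b| : ℤ) : ℝ) := by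
    simpa [hφ, Complex.norm_intCast] using key
  exact_mod_cast h2

lemma gauss_decomp {n : ℕ} (g : Fin n → Polynomial ℚ) (hg : ∀ i, 0 < (g i).natDegree)
    (f : Polynomial ℤ) (hf : f.map (Int.castRingHom ℚ) = ∏ i, g i) :
    ∃ (c : ℤ) (P : Fin n → Polynomial ℤ), f = C c * ∏ i, P i ∧
      ∀ i, 0 < (P i).natDegree := by
  have hg0 : ∀ i, g i ≠ 0 := fun i h => absurd (hg i) (by rw [h]; simp)
  have hinj : Function.Injective (Int.castRingHom ℚ) := fun x y h =>
    Int.cast_injective (α := ℚ) h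
  set G : Fin n → Polynomial ℤ :=
    fun i => IsLocalization.integerNormalization (nonZeroDivisors ℤ) (g i) with hG
  have hspec := fun i =>
    IsLocalization.integerNormalization_map_to_map (nonZeroDivisors ℤ) (g i)
  choose b hb using hspec
  have hbne : ∀ i, ((b i : ℤ) : ℚ) ≠ 0 := fun i => by
    have := nonZeroDivisors.coe_ne_zero (b i)
    exact_mod_cast this
  have hmapC : ∀ i, (G i).map (Int.castRingHom ℚ) = C ((b i : ℤ) : ℚ) * g i := by
    intro i
    rw [hG, show (Int.castRingHom ℚ) = algebraMap ℤ ℚ from rfl, hb i,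
      ← Int.cast_smul_eq_zsmul ℚ, smul_eq_C_mul]
  have hG0 : ∀ i, G i ≠ 0 := by
    intro i h
    have h2 := hmapC i
    rw [h, Polynomial.map_zero] at h2
    rcases mul_eq_zero.mp h2.symm with h' | h'
    · exact hbne i (C_eq_zero.mp h')
    · exact hg0 i h'
  have hdegG : ∀ i, (G i).natDegree = (g i).natDegree := by
    intro i
    rw [← natDegree_map_eq_of_injective hinj (G i), hmapC i, natDegree_C_mul (hbne i)]
  set B : ℤ := ∏ i, (b i : ℤ) with hB
  have hBne : B ≠ 0 := Finset.prod_ne_zero_iff.mpr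
    (fun i _ => nonZeroDivisors.coe_ne_zero (b i))
  have hCprod : (Polynomial.C ((B : ℤ) : ℚ)) = ∏ i, Polynomial.C ((b i : ℤ) : ℚ) := by
    rw [hB]
    push_cast
    rw [map_prod]
  have hprod : ∏ i, G i = C B * f := by
    apply Polynomial.map_injective _ hinj
    rw [Polynomial.map_prod, Polynomial.map_mul, Polynomial.map_C, hf,
      Finset.prod_congr rfl (fun i _ => hmapC i), Finset.prod_mul_distrib]
    congr 1
    exact hCprod.symm
  set P : Fin n → Polynomial ℤ := fun i => (G i).primPart with hP
  have hdegP : ∀ i, 0 < (P i).natDegree := by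
    intro i
    rw [hP]
    simpa only [natDegree_primPart, hdegG i] using hg i
  set Q : Polynomial ℤ := ∏ i, P i with hQ
  have hQprim : Q.IsPrimitive := by
    rw [hQ]
    apply Finset.prod_induction _ Polynomial.IsPrimitive
      (fun p q hp hq => hp.mul hq) isPrimitive_one
    intro i _
    exact isPrimitive_primPart (G i)
  set D : ℤ := ∏ i, (G i).content with hD
  have hGD : ∏ i, G i = C D * Q := by
    rw [hD, hQ, map_prod, ← Finset.prod_mul_distrib]
    exact Finset.prod_congr rfl (fun i _ => (G i).eq_C_content_mul_primPart)
  have hkey : C B * f = C D * Q := by rw [← hprod, hGD]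
  have hcont : normalize B * f.content = normalize D := by
    have h1 : (C B * f).content = normalize B * f.content := content_C_mul B f
    have h2 : (C D * Q).content = normalize D * Q.content := content_C_mul D Q
    rw [hkey, h2, hQprim.content_eq_one, mul_one] at h1
    exact h1.symm
  have habs : |B * f.content| = |D| := by
    rw [Int.abs_eq_normalize, Int.abs_eq_normalize, ← hcont]
    rw [normalize_mul]
    congr 1
    exact normalize_content
  rcases abs_eq_abs.mp habs with h | h
  · exact ⟨f.content, P, by
      apply mul_left_cancel₀ (a := C B) (by simpa using hBne)
      rw [hkey, ← h, map_mul]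
      ring, hdegP⟩
  · exact ⟨-f.content, P, by
      apply mul_left_cancel₀ (a := C B) (by simpa using hBne)
      rw [hkey, show D = B * -f.content by rw [mul_neg, h, neg_neg]]
      rw [map_mul]
      ring, hdegP⟩

theorem stmt7 (f : Polynomial ℤ) (a b : ℤ) (k : ℕ) (hk : 1 ≤ k)
    (ha : f.eval a ≠ 0) (hab : |f.eval a| < |f.eval b|) (hab2 : a ^ 2 < b ^ 2)
    (M : ℝ) (hM : ∀ θ : ℂ, aeval θ f = 0 → ‖θ‖ ≤ M)
    (hq : IsQk f a b k 1)
    (hMab : M < (|a + b| : ℝ) / 2) :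
    FactorsAtMost f k := by
  intro g hgdeg hf
  obtain ⟨c, P, hfP, hPdeg⟩ := gauss_decomp g hgdeg f hf
  have hroot : ∀ θ : ℂ, aeval θ f = 0 →
      ‖(a : ℂ) - θ‖ < ‖(b : ℂ) - θ‖ :=
    fun θ hθ => root_lt hab2 hMab (hM θ hθ)
  have hfb : f.eval b ≠ 0 := by
    intro h
    rw [h, abs_zero] at hab
    exact absurd hab (not_lt.mpr (abs_nonneg _))
  have hPdvd : ∀ i, P i ∣ f := by
    intro i
    rw [hfP]
    exact (Finset.dvd_prod_of_mem P (Finset.mem_univ i)).mul_left _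
  have hPa0 : ∀ i, (P i).eval a ≠ 0 := by
    intro i h
    have hd := eval_dvd (x := a) (hPdvd i)
    rw [h] at hd
    exact ha (zero_dvd_iff.mp hd)
  have hlt : ∀ i, |(P i).eval a| < |(P i).eval b| :=
    fun i => eval_abs_lt (hPdvd i) (hPdeg i) hroot
  have hPaabs : ∀ i, (0:ℝ) < ((|(P i).eval a| : ℤ) : ℝ) := by
    intro i
    exact_mod_cast abs_pos.mpr (hPa0 i)
  set r : Fin (k+1) → ℝ := fun i => ((|(P i).eval b| : ℤ) : ℝ) / ((|(P i).eval a| : ℤ) : ℝ)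
    with hr
  have hr1 : ∀ i, 1 < r i := by
    intro i
    rw [hr]
    apply (one_lt_div (hPaabs i)).mpr
    exact_mod_cast hlt i
  have hr0 : ∀ i, 0 < r i := fun i => lt_trans one_pos (hr1 i)
  have hc0 : c ≠ 0 := by
    intro h; rw [hfP, h] at ha; simp at ha
  have heva : f.eval a = c * ∏ i, (P i).eval a := by
    rw [hfP]; simp [eval_prod]
  have hevb : f.eval b = c * ∏ i, (P i).eval b := by
    rw [hfP]; simp [eval_prod]
  have hprodr : ∏ i, r i = ((|f.eval b| : ℤ) : ℝ) / ((|f.eval a| : ℤ) : ℝ) := by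
    rw [hr, Finset.prod_div_distrib, heva, hevb]
    push_cast [abs_mul, Finset.abs_prod]
    rw [mul_div_mul_left]
    simp [abs_ne_zero.mpr hc0]
    exact fun h => hc0 (by exact_mod_cast h)
  obtain ⟨i, _, hi⟩ := Finset.exists_min_image Finset.univ r
    ⟨⟨0, Nat.succ_pos k⟩, Finset.mem_univ _⟩
  have hpow : r i ^ (k+1) ≤ ((|f.eval b| : ℤ) : ℝ) / ((|f.eval a| : ℤ) : ℝ) := by
    rw [← hprodr]
    calc r i ^ (k+1) = ∏ _j : Fin (k+1), r i := by
          rw [Finset.prod_const, Finset.card_univ, Fintype.card_fin]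
      _ ≤ ∏ j, r j := Finset.prod_le_prod (fun j _ => (hr0 i).le)
          (fun j hj => hi j hj)
  have hle : r i ≤ (|((f.eval b : ℤ) : ℝ)| / |((f.eval a : ℤ) : ℝ)|) ^ ((k + 1 : ℝ))⁻¹ := by
    have hri : r i = (r i ^ (k+1) : ℝ) ^ ((k + 1 : ℝ))⁻¹ := by
      rw [← Real.rpow_natCast (r i) (k+1), ← Real.rpow_mul (hr0 i).le]
      push_cast
      rw [mul_inv_cancel₀ (by positivity), Real.rpow_one]
    rw [hri]
    apply Real.rpow_le_rpow (by positivity) _ (by positivity)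
    rw [show |((f.eval b : ℤ) : ℝ)| = ((|f.eval b| : ℤ) : ℝ) by push_cast; ring,
      show |((f.eval a : ℤ) : ℝ)| = ((|f.eval a| : ℤ) : ℝ) by push_cast; ring]
    exact hpow
  have hadm : ∀ x : ℤ, f.eval x ≠ 0 → AdmDiv f x ((P i).eval x) := by
    intro x hx
    apply admDiv_of_factor (f := f) (P := P i)
      (H := C c * ∏ j ∈ Finset.univ.erase i, P j) hx
    rw [hfP, ← Finset.mul_prod_erase Finset.univ P (Finset.mem_univ i)]
    ring
  have hmem : r i ∈ {x : ℝ | ∃ d₁ d₂ : ℤ, AdmDiv f a d₁ ∧ AdmDiv f b d₂ ∧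
      x = (d₂ : ℝ) / (d₁ : ℝ) ∧
      x ≤ (|((f.eval b : ℤ) : ℝ)| / |((f.eval a : ℤ) : ℝ)|) ^ ((k + 1 : ℝ))⁻¹} :=
    ⟨|(P i).eval a|, |(P i).eval b|, admDiv_abs (hadm a ha), admDiv_abs (hadm b hfb),
      rfl, hle⟩
  have hub := hq.2 hmem
  exact absurd hub (not_le.mpr (hr1 i))
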